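/- Let G be a graph, let (T,X) be a tree decomposition of G, and let P ⊆ T be a path with ends i₀ and j₀ such that i₀ is a nonredundant end of P. Fix a node i ∈ V(P); if i ≠ i₀ let V_P⁻ be the node set of the component of P − i containing the neighbor of i on P on the side of i₀, and if i ≠ j₀ let V_P⁺ be the node set of the component of P − i containing the neighbor of i on P on the side of j₀. Set A⁻ := ⋃_{j∈V_P⁻}(R_j ∪ S_j) (defined when i ≠ i₀) and A⁺ := ⋃_{j∈V_P⁺}(R_j ∪ S_j) (defined when i ≠ j₀). Then R_i, S_i, A⁻, and A⁺ (those among them that are defined) partition V(G); every vertex of R_i is isolated in G − E_G(i); and no edge of G − E_G(i) joins two distinct sets among S_i, A⁻, A⁺. -/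

import Mathlib

open scoped Classical

namespace MinBisection

noncomputable section

variable {V ι : Type*}

/-- The number of edges of `G` with one endpoint in `B` and the other outside of `B`,
i.e., the width `e_G(B, W)` of the cut `(B, W)` where `W` is the complement of `B`. -/
def cutWidth (G : SimpleGraph V) (B : Finset V) : ℕ :=
  Nat.card {e : Sym2 V // ∃ x y, G.Adj x y ∧ x ∈ B ∧ y ∉ B ∧ e = s(x, y)}

/-- The number of edges of `G` whose endpoints lie in two different parts of the
partition `(B, W, Z)` of the vertex set. -/
def cutWidth3 (G : SimpleGraph V) (B W Z : Finset V) : ℕ :=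
  Nat.card {e : Sym2 V // ∃ x y, G.Adj x y ∧ e = s(x, y) ∧
    ¬ ((x ∈ B ∧ y ∈ B) ∨ (x ∈ W ∧ y ∈ W) ∨ (x ∈ Z ∧ y ∈ Z))}

/-- `(B, Bᶜ)` is a bisection: the sizes of the two parts differ by at most one. -/
def IsBisection [Fintype V] (B : Finset V) : Prop :=
  B.card ≤ Bᶜ.card + 1 ∧ Bᶜ.card ≤ B.card + 1

/-- The minimum bisection width `MinBis(G)`. -/
def minBis (G : SimpleGraph V) [Fintype V] : ℕ :=
  sInf {k | ∃ B : Finset V, IsBisection B ∧ cutWidth G B = k}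

/-- The maximum degree `Δ(G)`. -/
def maxDeg (G : SimpleGraph V) [Fintype V] : ℕ :=
  Finset.univ.sup fun v => Nat.card {u // G.Adj v u}

/-- The number of vertices on a longest path in `G`. -/
def longestPathCard (G : SimpleGraph V) : ℕ :=
  sSup {k | ∃ (u v : V) (p : G.Walk u v), p.IsPath ∧ k = p.support.length}

/-- The relative diameter `diam*` of a connected graph: the number of vertices on a
longest path divided by the number of vertices. -/
def diamStar (G : SimpleGraph V) [Fintype V] : ℝ :=
  (longestPathCard G : ℝ) / (Fintype.card V : ℝ)

/-- The number of vertices on a longest path contained in the connected component `c`. -/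
def compLongestPathCard (G : SimpleGraph V) (c : G.ConnectedComponent) : ℕ :=
  sSup {k | ∃ (u v : V) (p : G.Walk u v), p.IsPath ∧ G.connectedComponentMk u = c ∧
    k = p.support.length}

/-- The relative diameter `diam*` of a forest: the sum over all connected components of the
number of vertices on a longest path in the component, divided by the number of vertices. -/
def forestDiamStar (G : SimpleGraph V) [Fintype V] : ℝ :=
  letI : Fintype G.ConnectedComponent := Fintype.ofFinite _
  (∑ c : G.ConnectedComponent, (compLongestPathCard G c : ℝ)) / (Fintype.card V : ℝ)

/-- `(T, X)` is a tree decomposition of `G`. -/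
structure IsTreeDecomp (G : SimpleGraph V) (T : SimpleGraph ι) (X : ι → Finset V) : Prop where
  isTree : T.IsTree
  mem_cluster : ∀ v : V, ∃ i, v ∈ X i
  edge_cluster : ∀ ⦃u v : V⦄, G.Adj u v → ∃ i, u ∈ X i ∧ v ∈ X i
  inter_subset : ∀ ⦃i j : ι⦄ (p : T.Walk i j), p.IsPath → ∀ h ∈ p.support, X i ∩ X j ⊆ X h

/-- The weight `w(P, X)` of a path `p` of the tree `T` with respect to the clusters `X`:
the cardinality of the union of the clusters along the path. -/
def walkWeight (X : ι → Finset V) {T : SimpleGraph ι} {i j : ι} (p : T.Walk i j) : ℕ :=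
  (p.support.toFinset.biUnion X).card

/-- The relative weight `r(T, X)` of a heaviest path in the tree decomposition `(T, X)`. -/
def rTD [Fintype V] (T : SimpleGraph ι) (X : ι → Finset V) : ℝ :=
  (↑(sSup {w : ℕ | ∃ (i j : ι) (p : T.Walk i j), p.IsPath ∧ w = walkWeight X p}) : ℝ) /
    (Fintype.card V : ℝ)

/-- The path `p` is nonredundant: one of its two ends `i` is a nonredundant end, i.e.,
`X i ≠ ∅` and no cluster along the path contains the previous one when traversed from `i`. -/
def NonredundantPath (X : ι → Finset V) {T : SimpleGraph ι} {i j : ι} (p : T.Walk i j) : Prop :=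
  (X i ≠ ∅ ∧ List.Chain' (fun a b => ¬ X b ⊆ X a) p.support) ∨
  (X j ≠ ∅ ∧ List.Chain' (fun a b => ¬ X b ⊆ X a) p.reverse.support)

/-- `R_i`: the set of vertices whose path node (first node along `p`, traversed from the
end `i₀`, whose cluster contains the vertex) is `i`. -/
def Rset (X : ι → Finset V) {T : SimpleGraph ι} {i₀ j₀ : ι} (p : T.Walk i₀ j₀) (i : ι) :
    Set V :=
  {x | ∃ (k : ℕ) (hk : k < p.support.length), p.support.get ⟨k, hk⟩ = i ∧ x ∈ X i ∧
    ∀ (l : ℕ) (hl : l < k), x ∉ X (p.support.get ⟨l, hl.trans hk⟩)}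

/-- `S_i`: the union of the clusters over the component `T_i` of `T - E(P)` containing `i`,
minus `R = ⋃_{h ∈ V(P)} X^h`. -/
def Sset (X : ι → Finset V) {T : SimpleGraph ι} {i₀ j₀ : ι} (p : T.Walk i₀ j₀) (i : ι) :
    Set V :=
  {x | (∃ j, (∃ q : T.Walk i j, ∀ e ∈ q.edges, e ∉ p.edges) ∧ x ∈ X j) ∧
    ∀ h ∈ p.support, x ∉ X h}

end

end MinBisection

namespace CutPAux

open SimpleGraph Walk
open scoped Classical

variable {ι V : Type*} {T : SimpleGraph ι}

lemma support_get_getVert {a b : ι} (p : T.Walk a b) :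
    ∀ (k : ℕ) (hk : k < p.support.length), p.support.get ⟨k, hk⟩ = p.getVert k := by
  induction p with
  | nil =>
    intro k hk
    simp only [support_nil, List.length_singleton] at hk
    interval_cases k
    rfl
  | cons h q ih =>
    intro k hk
    cases k with
    | zero => rfl
    | succ k => exact ih k (by simpa using hk)

lemma edge_getVert_mem {a b : ι} (p : T.Walk a b) :
    ∀ (k : ℕ), k < p.length → s(p.getVert k, p.getVert (k+1)) ∈ p.edges := by
  induction p with
  | nil => simp
  | cons h q ih =>
    intro k hk
    cases k with
    | zero =>
      simp [getVert_zero, edges_cons, getVert_cons_succ]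
    | succ k =>
      simp only [getVert_cons_succ, edges_cons]
      right
      exact ih k (by simpa using hk)

lemma getVert_injOn {a b : ι} {p : T.Walk a b} (hp : p.IsPath)
    {m n : ℕ} (hm : m ≤ p.length) (hn : n ≤ p.length) (h : p.getVert m = p.getVert n) :
    m = n := by
  have hs := hp.support_nodup
  have hm' : m < p.support.length := by rw [length_support]; omega
  have hn' : n < p.support.length := by rw [length_support]; omega
  have h2 : p.support.get ⟨m, hm'⟩ = p.support.get ⟨n, hn'⟩ := by
    rw [support_get_getVert, support_get_getVert, h]
  have := (List.Nodup.get_inj_iff hs).1 h2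
  exact congrArg Fin.val this

lemma getVert_mem_support {a b : ι} (p : T.Walk a b) {m : ℕ} (hm : m ≤ p.length) :
    p.getVert m ∈ p.support :=
  mem_support_iff_exists_getVert.2 ⟨m, rfl, hm⟩


lemma exists_segment {a b : ι} (p : T.Walk a b) :
    ∀ (d l : ℕ), l + d ≤ p.length →
    ∃ q : T.Walk (p.getVert l) (p.getVert (l + d)),
      q.support = (List.range (d+1)).map (fun m => p.getVert (l+m)) ∧
      ∀ e ∈ q.edges, e ∈ p.edges := by
  intro d
  induction d with
  | zero =>
    intro l _
    exact ⟨Walk.nil, by rw [List.range_succ]; simp, by simp⟩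
  | succ d ih =>
    intro l hl
    have hadj : T.Adj (p.getVert l) (p.getVert (l+1)) := p.adj_getVert_succ (by omega)
    obtain ⟨q, hsup, hedge⟩ := ih (l+1) (by omega)
    have hcast : l + 1 + d = l + (d + 1) := by omega
    have hlist : (List.range (d+1+1)).map (fun m => p.getVert (l+m)) =
        p.getVert l :: (List.range (d+1)).map (fun m => p.getVert (l+1+m)) := by
      rw [List.range_succ_eq_map, List.map_cons, List.map_map]
      simp only [Nat.add_zero]
      congr 1
      apply List.map_congr_left
      intro m _
      simp only [Function.comp_apply]
      congr 1
      omega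
    refine ⟨Walk.cons hadj (q.copy rfl (by rw [hcast])), ?_, ?_⟩
    · rw [support_cons, support_copy, hsup, hlist]
    · intro e he
      rw [edges_cons, edges_copy] at he
      rcases List.mem_cons.1 he with h | h
      · subst h; exact edge_getVert_mem p l (by omega)
      · exact hedge e h


lemma exists_segment_path {a b : ι} {p : T.Walk a b} (hp : p.IsPath) {l k : ℕ}
    (hl : l ≤ p.length) (hk : k ≤ p.length) :
    ∃ q : T.Walk (p.getVert l) (p.getVert k), q.IsPath ∧
      (∀ e ∈ q.edges, e ∈ p.edges) ∧
      (∀ m, min l k ≤ m → m ≤ max l k → p.getVert m ∈ q.support) ∧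
      (∀ x ∈ q.support, ∃ m, min l k ≤ m ∧ m ≤ max l k ∧ x = p.getVert m) := by
  -- first the case l ≤ k, then reverse
  have core : ∀ l k : ℕ, l ≤ k → k ≤ p.length →
      ∃ q : T.Walk (p.getVert l) (p.getVert k), q.IsPath ∧
      (∀ e ∈ q.edges, e ∈ p.edges) ∧
      (∀ m, l ≤ m → m ≤ k → p.getVert m ∈ q.support) ∧
      (∀ x ∈ q.support, ∃ m, l ≤ m ∧ m ≤ k ∧ x = p.getVert m) := by
    intro l k hlk hkp
    obtain ⟨q, hsup, hedge⟩ := exists_segment p (k - l) l (by omega)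
    have hcast : l + (k - l) = k := by omega
    refine ⟨q.copy rfl (by rw [hcast]), ?_, ?_, ?_, ?_⟩
    · rw [Walk.isPath_def, support_copy, hsup]
      refine List.Nodup.map_on ?_ List.nodup_range
      intro m hm m' hm' hmm
      rw [List.mem_range] at hm hm'
      have := getVert_injOn hp (m := l + m) (n := l + m') (by omega) (by omega) hmm
      omega
    · intro e he; rw [edges_copy] at he; exact hedge e he
    · intro m hm hm'
      rw [support_copy, hsup]
      refine List.mem_map.2 ⟨m - l, ?_, by congr 1; omega⟩
      rw [List.mem_range]; omega
    · intro x hx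
      rw [support_copy, hsup] at hx
      obtain ⟨m, hm, rfl⟩ := List.mem_map.1 hx
      rw [List.mem_range] at hm
      exact ⟨l + m, by omega, by omega, rfl⟩
  rcases le_total l k with h | h
  · obtain ⟨q, h1, h2, h3, h4⟩ := core l k h hk
    rw [min_eq_left h, max_eq_right h]
    exact ⟨q, h1, h2, h3, h4⟩
  · obtain ⟨q, h1, h2, h3, h4⟩ := core k l h hl
    rw [min_eq_right h, max_eq_left h]
    refine ⟨q.reverse, h1.reverse, ?_, ?_, ?_⟩
    · intro e he; rw [edges_reverse, List.mem_reverse] at he; exact h2 e he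
    · intro m hm hm'
      rw [support_reverse, List.mem_reverse]; exact h3 m hm hm'
    · intro x hx
      rw [support_reverse, List.mem_reverse] at hx; exact h4 x hx

lemma exists_pedge_of_walk (hT : T.IsAcyclic) {a b : ι} {p : T.Walk a b} (hp : p.IsPath)
    {l k : ℕ} (hl : l ≤ p.length) (hk : k ≤ p.length) (hne : l ≠ k)
    (w : T.Walk (p.getVert l) (p.getVert k)) : ∃ e ∈ w.edges, e ∈ p.edges := by
  obtain ⟨q, hq, hqe, -, -⟩ := exists_segment_path hp hl hk
  have huniq : w.bypass = q := by
    have := hT.path_unique ⟨w.bypass, w.bypass_isPath⟩ ⟨q, hq⟩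
    exact congrArg Subtype.val this
  have hnil : q.length ≠ 0 := by
    intro h0
    apply hne
    apply getVert_injOn hp hl hk
    have h1 : q.getVert 0 = p.getVert l := q.getVert_zero
    have h2 : q.getVert q.length = p.getVert k := q.getVert_length
    rw [h0] at h2
    rw [← h1, h2]
  have : q.edges ≠ [] := by
    intro h
    apply hnil
    have := q.length_edges
    rw [h] at this
    simpa using this.symm
  obtain ⟨e, he⟩ := List.exists_mem_of_ne_nil _ this
  refine ⟨e, ?_, hqe e he⟩
  have : e ∈ w.bypass.edges := by rw [huniq]; exact he
  exact w.edges_bypass_subset this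

lemma comp_unique (hT : T.IsAcyclic) {a b : ι} {p : T.Walk a b} (hp : p.IsPath)
    {l k : ℕ} (hl : l ≤ p.length) (hk : k ≤ p.length) {h : ι}
    (w1 : T.Walk (p.getVert l) h) (w2 : T.Walk (p.getVert k) h)
    (h1 : ∀ e ∈ w1.edges, e ∉ p.edges) (h2 : ∀ e ∈ w2.edges, e ∉ p.edges) : l = k := by
  by_contra hne
  obtain ⟨e, he, hep⟩ := exists_pedge_of_walk hT hp hl hk hne (w1.append w2.reverse)
  rw [edges_append, List.mem_append] at he
  rcases he with he | he
  · exact h1 e he hep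
  · rw [edges_reverse, List.mem_reverse] at he
    exact h2 e he hep

lemma reach_aux {a b : ι} (p : T.Walk a b) {j c : ι} (w : T.Walk j c) :
    (∃ l ≤ p.length, ∃ q : T.Walk (p.getVert l) c, ∀ e ∈ q.edges, e ∉ p.edges) →
    ∃ l ≤ p.length, ∃ q : T.Walk (p.getVert l) j, ∀ e ∈ q.edges, e ∉ p.edges := by
  induction w with
  | nil => exact id
  | @cons j d c hadj w' ih =>
    intro hc
    by_cases hmem : s(j, d) ∈ p.edges
    · have hj : j ∈ p.support := p.fst_mem_support_of_mem_edges hmem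
      obtain ⟨n, hn, hnl⟩ := (mem_support_iff_exists_getVert).1 hj
      exact ⟨n, hnl, Walk.nil.copy hn.symm rfl, by simp⟩
    · obtain ⟨l, hl, q, hq⟩ := ih hc
      refine ⟨l, hl, q.concat hadj.symm, ?_⟩
      intro e he
      rw [edges_concat] at he; rw [List.concat_eq_append, List.mem_append, List.mem_singleton] at he
      rcases he with he | he
      · exact hq e he
      · subst he
        rw [Sym2.eq_swap]
        exact hmem

lemma exists_reach (hT : T.Connected) {a b : ι} (p : T.Walk a b) (j : ι) :
    ∃ l ≤ p.length, ∃ q : T.Walk (p.getVert l) j, ∀ e ∈ q.edges, e ∉ p.edges := by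
  obtain ⟨w⟩ := hT j a
  exact reach_aux p w ⟨0, Nat.zero_le _, Walk.nil.copy (getVert_zero p).symm rfl, by simp⟩


lemma bypass_support_unique (hT : T.IsAcyclic) {a b : ι} {p : T.Walk a b} (hp : p.IsPath)
    {s : ℕ} (hs : s ≤ p.length) {h : ι} (w2 : T.Walk (p.getVert s) h)
    (hw2 : ∀ e ∈ w2.edges, e ∉ p.edges) {m : ℕ} (hm : m ≤ p.length)
    (hmem : p.getVert m ∈ w2.support) : m = s := by
  by_contra hne
  obtain ⟨e, he, hep⟩ := exists_pedge_of_walk hT hp hs hm (Ne.symm hne)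
    (w2.takeUntil (p.getVert m) hmem)
  exact hw2 e (edges_takeUntil_subset _ _ he) hep

lemma between_mem {X : ι → Finset V}
    (hins : ∀ ⦃i j : ι⦄ (q : T.Walk i j), q.IsPath → ∀ h ∈ q.support, X i ∩ X j ⊆ X h)
    (hT : T.IsAcyclic) {a b : ι} {p : T.Walk a b} (hp : p.IsPath)
    {l s : ℕ} (hl : l ≤ p.length) (hs : s ≤ p.length) {h : ι}
    (w2 : T.Walk (p.getVert s) h) (hw2 : ∀ e ∈ w2.edges, e ∉ p.edges)
    {u : V} (hu1 : u ∈ X (p.getVert l)) (hu2 : u ∈ X h)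
    {m : ℕ} (hm1 : min l s ≤ m) (hm2 : m ≤ max l s) : u ∈ X (p.getVert m) := by
  obtain ⟨q, hq, hqe, hqmem, hqsup⟩ := exists_segment_path hp hl hs
  have hπp : w2.bypass.IsPath := w2.bypass_isPath
  have hπe : ∀ e ∈ w2.bypass.edges, e ∉ p.edges :=
    fun e he => hw2 e (w2.edges_bypass_subset he)
  have hπuniq : ∀ m' ≤ p.length, p.getVert m' ∈ w2.bypass.support → m' = s :=
    fun m' hm' hmm => bypass_support_unique hT hp hs w2.bypass hπe hm' hmm
  have hdisj : ∀ x ∈ q.support, x ∉ w2.bypass.support.tail := by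
    intro x hx hx'
    obtain ⟨m', hm'1, hm'2, rfl⟩ := hqsup x hx
    have hm'le : m' ≤ p.length := by
      rcases le_total l s with hh | hh
      · rw [max_eq_right hh] at hm'2; omega
      · rw [max_eq_left hh] at hm'2; omega
    have : p.getVert m' ∈ w2.bypass.support := by
      rw [support_eq_cons]; exact List.mem_cons_of_mem _ hx'
    have heq : m' = s := hπuniq m' hm'le this
    subst heq
    have := hπp.support_nodup
    rw [support_eq_cons] at this
    exact (List.nodup_cons.1 this).1 hx'
  have hW : (q.append w2.bypass).IsPath := by
    rw [isPath_def, support_append]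
    exact List.Nodup.append hq.support_nodup (hπp.support_nodup.tail) hdisj
  have hmm : p.getVert m ∈ (q.append w2.bypass).support :=
    subset_support_append_left _ _ (hqmem m hm1 hm2)
  exact hins (q.append w2.bypass) hW _ hmm (Finset.mem_inter.2 ⟨hu1, hu2⟩)


lemma mem_Rset_iff {X : ι → Finset V} {a b : ι} {p : T.Walk a b} (hp : p.IsPath) {k : ℕ}
    (hk : k ≤ p.length) {x : V} :
    x ∈ MinBisection.Rset X p (p.getVert k) ↔
      x ∈ X (p.getVert k) ∧ ∀ l < k, x ∉ X (p.getVert l) := by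
  simp only [MinBisection.Rset, Set.mem_setOf_eq]
  constructor
  · rintro ⟨k', hk', hget, hx, hmin⟩
    rw [support_get_getVert] at hget
    have hk'le : k' ≤ p.length := by have := p.length_support; omega
    have hkk : k' = k := getVert_injOn hp hk'le hk hget
    subst hkk
    refine ⟨hx, fun l hl => ?_⟩
    have := hmin l hl
    rwa [support_get_getVert] at this
  · rintro ⟨hx, hmin⟩
    refine ⟨k, by rw [p.length_support]; omega, by rw [support_get_getVert], hx, ?_⟩
    intro l hl
    rw [support_get_getVert]
    exact hmin l hl

lemma walk_to_cluster {X : ι → Finset V}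
    (hins : ∀ ⦃i j : ι⦄ (q : T.Walk i j), q.IsPath → ∀ h ∈ q.support, X i ∩ X j ⊆ X h)
    (hconn : T.Connected) {a b : ι} {p : T.Walk a b} {j h : ι} {u : V}
    (huj : u ∈ X j) (huh : u ∈ X h) (hforb : ∀ x ∈ p.support, u ∉ X x) :
    ∃ π : T.Walk j h, ∀ e ∈ π.edges, e ∉ p.edges := by
  obtain ⟨w⟩ := hconn j h
  refine ⟨w.bypass, ?_⟩
  intro e he hep
  induction e with
  | _ x y =>
    have hx : x ∈ w.bypass.support := Walk.fst_mem_support_of_mem_edges _ he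
    have hxp : x ∈ p.support := p.fst_mem_support_of_mem_edges hep
    have : u ∈ X x := hins w.bypass w.bypass_isPath x hx (Finset.mem_inter.2 ⟨huj, huh⟩)
    exact hforb x hxp this

lemma Sset_component {X : ι → Finset V}
    (hins : ∀ ⦃i j : ι⦄ (q : T.Walk i j), q.IsPath → ∀ h ∈ q.support, X i ∩ X j ⊆ X h)
    (hacyc : T.IsAcyclic) (hconn : T.Connected) {a b : ι} {p : T.Walk a b} (hp : p.IsPath)
    {s s' : ℕ} (hs : s ≤ p.length) (hs' : s' ≤ p.length) {x : V} {h : ι}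
    (h1 : x ∈ MinBisection.Sset X p (p.getVert s)) (hxh : x ∈ X h)
    (w2 : T.Walk (p.getVert s') h) (hw2 : ∀ e ∈ w2.edges, e ∉ p.edges) : s = s' := by
  obtain ⟨⟨j, ⟨q, hq⟩, hxj⟩, hforb⟩ := h1
  obtain ⟨π, hπ⟩ := walk_to_cluster hins hconn (p := p) hxj hxh hforb
  refine comp_unique hacyc hp hs hs' (q.append π) w2 ?_ hw2
  intro e he
  rw [Walk.edges_append, List.mem_append] at he
  rcases he with he | he
  · exact hq e he
  · exact hπ e he

lemma Sset_index_unique {X : ι → Finset V}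
    (hins : ∀ ⦃i j : ι⦄ (q : T.Walk i j), q.IsPath → ∀ h ∈ q.support, X i ∩ X j ⊆ X h)
    (hacyc : T.IsAcyclic) (hconn : T.Connected) {a b : ι} {p : T.Walk a b} (hp : p.IsPath)
    {s s' : ℕ} (hs : s ≤ p.length) (hs' : s' ≤ p.length) {x : V}
    (h1 : x ∈ MinBisection.Sset X p (p.getVert s))
    (h2 : x ∈ MinBisection.Sset X p (p.getVert s')) : s = s' := by
  obtain ⟨⟨j', ⟨q', hq'⟩, hxj'⟩, hforb'⟩ := h2
  exact Sset_component hins hacyc hconn hp hs hs' h1 hxj' q' hq'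


end CutPAux

/-- Let `(T, X)` be a tree decomposition of `G` and `P ⊆ T` a path with a
nonredundant end `i₀`. Fix a node `i` on `P` (at position `k`) and let `A⁻` and `A⁺` be the
unions of the sets `R_j ∪ S_j` over the nodes `j` before, respectively after, `i` on `P`.
Then `R_i`, `S_i`, `A⁻`, `A⁺` partition `V(G)`, every vertex of `R_i` is isolated in
`G - E_G(i)`, and no edge of `G - E_G(i)` joins two distinct sets among `S_i, A⁻, A⁺`. -/
theorem MinBisection.cut_P_labeling {V ι : Type*} [Fintype V] [Fintype ι]
    (G : SimpleGraph V) (T : SimpleGraph ι) (X : ι → Finset V)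
    (hTD : IsTreeDecomp G T X) {i₀ j₀ : ι} (p : T.Walk i₀ j₀) (hp : p.IsPath)
    (hne : X i₀ ≠ ∅) (hnr : List.Chain' (fun a b => ¬ X b ⊆ X a) p.support)
    (k : ℕ) (hk : k < p.support.length) (i : ι) (hi : p.support.get ⟨k, hk⟩ = i)
    (Am Ap : Set V)
    (hAm : Am = {x | ∃ (l : ℕ) (hl : l < p.support.length), l < k ∧
      x ∈ Rset X p (p.support.get ⟨l, hl⟩) ∪ Sset X p (p.support.get ⟨l, hl⟩)})
    (hAp : Ap = {x | ∃ (l : ℕ) (hl : l < p.support.length), k < l ∧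
      x ∈ Rset X p (p.support.get ⟨l, hl⟩) ∪ Sset X p (p.support.get ⟨l, hl⟩)}) :
    (Rset X p i ∪ Sset X p i ∪ Am ∪ Ap = Set.univ) ∧
    Disjoint (Rset X p i) (Sset X p i) ∧
    Disjoint (Rset X p i) Am ∧ Disjoint (Rset X p i) Ap ∧
    Disjoint (Sset X p i) Am ∧ Disjoint (Sset X p i) Ap ∧ Disjoint Am Ap ∧
    (∀ x ∈ Rset X p i, ∀ y : V, G.Adj x y → x ∈ X i ∨ y ∈ X i) ∧
    (∀ u v : V, G.Adj u v → u ∉ X i → v ∉ X i →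
      ((u ∈ Sset X p i ∧ v ∈ Sset X p i) ∨ (u ∈ Am ∧ v ∈ Am) ∨ (u ∈ Ap ∧ v ∈ Ap))) := by
  classical
  have hacyc : T.IsAcyclic := hTD.isTree.2
  have hconn : T.Connected := hTD.isTree.1
  have hins := hTD.inter_subset
  have hsuplen : p.support.length = p.length + 1 := p.length_support
  have hkle : k ≤ p.length := by omega
  have hgv : ∀ (l : ℕ) (hl : l < p.support.length), p.support.get ⟨l, hl⟩ = p.getVert l :=
    CutPAux.support_get_getVert p
  have hik : i = p.getVert k := by rw [← hi, hgv]
  subst hik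
  subst hAm
  subst hAp
  have hRiff : ∀ (l : ℕ), l ≤ p.length → ∀ x : V,
      x ∈ Rset X p (p.getVert l) ↔
        (x ∈ X (p.getVert l) ∧ ∀ m < l, x ∉ X (p.getVert m)) :=
    fun l hl x => CutPAux.mem_Rset_iff hp hl
  -- membership characterizations for Am and Ap
  have hAmI : ∀ x : V, (x ∈ {x | ∃ (l : ℕ) (hl : l < p.support.length), l < k ∧
      x ∈ Rset X p (p.support.get ⟨l, hl⟩) ∪ Sset X p (p.support.get ⟨l, hl⟩)}) ↔
      ∃ l, l < k ∧ (x ∈ Rset X p (p.getVert l) ∨ x ∈ Sset X p (p.getVert l)) := by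
    intro x
    simp only [Set.mem_setOf_eq]
    constructor
    · rintro ⟨l, hl, hlk, hx⟩
      rw [hgv l hl, Set.mem_union] at hx
      exact ⟨l, hlk, hx⟩
    · rintro ⟨l, hlk, hx⟩
      have hl : l < p.support.length := by omega
      refine ⟨l, hl, hlk, ?_⟩
      rw [hgv l hl, Set.mem_union]
      exact hx
  have hApI : ∀ x : V, (x ∈ {x | ∃ (l : ℕ) (hl : l < p.support.length), k < l ∧
      x ∈ Rset X p (p.support.get ⟨l, hl⟩) ∪ Sset X p (p.support.get ⟨l, hl⟩)}) ↔
      ∃ l, k < l ∧ l ≤ p.length ∧ (x ∈ Rset X p (p.getVert l) ∨ x ∈ Sset X p (p.getVert l)) := by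
    intro x
    simp only [Set.mem_setOf_eq]
    constructor
    · rintro ⟨l, hl, hlk, hx⟩
      rw [hgv l hl, Set.mem_union] at hx
      exact ⟨l, hlk, by omega, hx⟩
    · rintro ⟨l, hlk, hle, hx⟩
      have hl : l < p.support.length := by omega
      refine ⟨l, hl, hlk, ?_⟩
      rw [hgv l hl, Set.mem_union]
      exact hx
  -- classification of all vertices
  have classify : ∀ x : V,
      (∃ l, l ≤ p.length ∧ x ∈ X (p.getVert l) ∧ ∀ m < l, x ∉ X (p.getVert m)) ∨
      ((∀ h ∈ p.support, x ∉ X h) ∧ ∃ l, l ≤ p.length ∧ x ∈ Sset X p (p.getVert l)) := by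
    intro x
    by_cases hx : ∃ m, m ≤ p.length ∧ x ∈ X (p.getVert m)
    · left
      obtain ⟨m, hm, hxm⟩ := hx
      have hP : ∃ m', x ∈ X (p.getVert m') := ⟨m, hxm⟩
      refine ⟨Nat.find hP, le_trans (Nat.find_min' hP hxm) hm, Nat.find_spec hP, ?_⟩
      intro m' hm'
      exact Nat.find_min hP hm'
    · right
      have hforb : ∀ h ∈ p.support, x ∉ X h := by
        intro h hh hxh
        obtain ⟨m, hm, hml⟩ := SimpleGraph.Walk.mem_support_iff_exists_getVert.1 hh
        exact hx ⟨m, hml, by rwa [hm]⟩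
      refine ⟨hforb, ?_⟩
      obtain ⟨j, hj⟩ := hTD.mem_cluster x
      obtain ⟨l, hl, q, hq⟩ := CutPAux.exists_reach hconn p j
      exact ⟨l, hl, ⟨j, ⟨q, hq⟩, hj⟩, hforb⟩
  have hkmem : p.getVert k ∈ p.support := CutPAux.getVert_mem_support p hkle
  refine ⟨?_, ?_, ?_, ?_, ?_, ?_, ?_, ?_, ?_⟩
  -- (1) union is everything
  · rw [Set.eq_univ_iff_forall]
    intro x
    rcases classify x with ⟨l, hl, hx, hmin⟩ | ⟨hforb, l, hl, hxS⟩
    · have hxR : x ∈ Rset X p (p.getVert l) := (hRiff l hl x).2 ⟨hx, hmin⟩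
      rcases lt_trichotomy l k with hlk | hlk | hlk
      · exact Set.mem_union_left _ (Set.mem_union_right _ ((hAmI x).2 ⟨l, hlk, Or.inl hxR⟩))
      · subst hlk
        exact Set.mem_union_left _ (Set.mem_union_left _ (Set.mem_union_left _ hxR))
      · exact Set.mem_union_right _ ((hApI x).2 ⟨l, hlk, hl, Or.inl hxR⟩)
    · rcases lt_trichotomy l k with hlk | hlk | hlk
      · exact Set.mem_union_left _ (Set.mem_union_right _ ((hAmI x).2 ⟨l, hlk, Or.inr hxS⟩))
      · subst hlk
        exact Set.mem_union_left _ (Set.mem_union_left _ (Set.mem_union_right _ hxS))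
      · exact Set.mem_union_right _ ((hApI x).2 ⟨l, hlk, hl, Or.inr hxS⟩)
  -- (2) Rset ∩ Sset = ∅
  · rw [Set.disjoint_left]
    intro x hxR hxS
    exact hxS.2 _ hkmem ((hRiff k hkle x).1 hxR).1
  -- (3) Rset ∩ Am = ∅
  · rw [Set.disjoint_left]
    intro x hxR hxAm
    obtain ⟨l, hlk, hx⟩ := (hAmI x).1 hxAm
    rcases hx with hx | hx
    · exact ((hRiff k hkle x).1 hxR).2 l hlk ((hRiff l (by omega) x).1 hx).1
    · exact hx.2 _ hkmem ((hRiff k hkle x).1 hxR).1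
  -- (4) Rset ∩ Ap = ∅
  · rw [Set.disjoint_left]
    intro x hxR hxAp
    obtain ⟨l, hkl, hle, hx⟩ := (hApI x).1 hxAp
    rcases hx with hx | hx
    · exact ((hRiff l hle x).1 hx).2 k hkl ((hRiff k hkle x).1 hxR).1
    · exact hx.2 _ hkmem ((hRiff k hkle x).1 hxR).1
  -- (5) Sset ∩ Am = ∅
  · rw [Set.disjoint_left]
    intro x hxS hxAm
    obtain ⟨l, hlk, hx⟩ := (hAmI x).1 hxAm
    rcases hx with hx | hx
    · exact hxS.2 _ (CutPAux.getVert_mem_support p (by omega)) ((hRiff l (by omega) x).1 hx).1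
    · have := CutPAux.Sset_index_unique hins hacyc hconn hp hkle (by omega : l ≤ p.length) hxS hx
      omega
  -- (6) Sset ∩ Ap = ∅
  · rw [Set.disjoint_left]
    intro x hxS hxAp
    obtain ⟨l, hkl, hle, hx⟩ := (hApI x).1 hxAp
    rcases hx with hx | hx
    · exact hxS.2 _ (CutPAux.getVert_mem_support p hle) ((hRiff l hle x).1 hx).1
    · have := CutPAux.Sset_index_unique hins hacyc hconn hp hkle hle hxS hx
      omega
  -- (7) Am ∩ Ap = ∅
  · rw [Set.disjoint_left]
    intro x hxAm hxAp
    obtain ⟨l, hlk, hx⟩ := (hAmI x).1 hxAm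
    obtain ⟨m, hkm, hmle, hx'⟩ := (hApI x).1 hxAp
    rcases hx with hx | hx <;> rcases hx' with hx' | hx'
    · exact ((hRiff m hmle x).1 hx').2 l (by omega) ((hRiff l (by omega) x).1 hx).1
    · exact hx'.2 _ (CutPAux.getVert_mem_support p (by omega)) ((hRiff l (by omega) x).1 hx).1
    · exact hx.2 _ (CutPAux.getVert_mem_support p hmle) ((hRiff m hmle x).1 hx').1
    · have := CutPAux.Sset_index_unique hins hacyc hconn hp (by omega : l ≤ p.length) hmle hx hx'
      omega
  -- (8) vertices of Rset are isolated outside E_G(i)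
  · intro x hx y _
    exact Or.inl ((hRiff k hkle x).1 hx).1
  -- (9) edges avoiding X i do not join distinct parts
  · intro u v huv hu hv
    obtain ⟨h, huh, hvh⟩ := hTD.edge_cluster huv
    obtain ⟨s, hsle, w2, hw2⟩ := CutPAux.exists_reach hconn p h
    have main : ∀ x : V, x ∈ X h → x ∉ X (p.getVert k) →
        x ∈ Sset X p (p.getVert s) ∨
        (∃ l, l ≤ p.length ∧ x ∈ Rset X p (p.getVert l) ∧
          ((l < k ∧ s < k) ∨ (k < l ∧ k < s))) := by
      intro x hxh hxk
      rcases classify x with ⟨l, hl, hx, hmin⟩ | ⟨hforb, l, hl, hxS⟩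
      · right
        refine ⟨l, hl, (hRiff l hl x).2 ⟨hx, hmin⟩, ?_⟩
        have hbet : ¬ (min l s ≤ k ∧ k ≤ max l s) := by
          rintro ⟨h1, h2⟩
          exact hxk (CutPAux.between_mem hins hacyc hp hl hsle w2 hw2 hx hxh h1 h2)
        have hlk : l ≠ k := fun e => hxk (e ▸ hx)
        omega
      · left
        have hls : l = s :=
          CutPAux.Sset_component hins hacyc hconn hp hl hsle hxS hxh w2 hw2
        subst hls
        exact hxS
    have hmu := main u huh hu
    have hmv := main v hvh hv
    rcases lt_trichotomy s k with hsk | hsk | hsk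
    · right; left
      constructor
      · rcases hmu with hmu | ⟨l, hle, hmu, hdic⟩
        · exact (hAmI u).2 ⟨s, hsk, Or.inr hmu⟩
        · exact (hAmI u).2 ⟨l, by omega, Or.inl hmu⟩
      · rcases hmv with hmv | ⟨l, hle, hmv, hdic⟩
        · exact (hAmI v).2 ⟨s, hsk, Or.inr hmv⟩
        · exact (hAmI v).2 ⟨l, by omega, Or.inl hmv⟩
    · subst hsk
      left
      constructor
      · rcases hmu with hmu | ⟨l, hle, hmu, hdic⟩
        · exact hmu
        · omega
      · rcases hmv with hmv | ⟨l, hle, hmv, hdic⟩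
        · exact hmv
        · omega
    · right; right
      constructor
      · rcases hmu with hmu | ⟨l, hle, hmu, hdic⟩
        · exact (hApI u).2 ⟨s, hsk, hsle, Or.inr hmu⟩
        · exact (hApI u).2 ⟨l, by omega, hle, Or.inl hmu⟩
      · rcases hmv with hmv | ⟨l, hle, hmv, hdic⟩
        · exact (hApI v).2 ⟨s, hsk, hsle, Or.inr hmv⟩
        · exact (hApI v).2 ⟨l, by omega, hle, Or.inl hmv⟩
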